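/- A bounded function f : [a,b] → ℝ on a compact interval [a,b] (a ≤ b) is Riemann integrable if and only if the set of points of [a,b] at which f is discontinuous has Lebesgue measure zero. -/

import Mathlib

open MeasureTheory

/-- A tagged partition of the interval `[a, b]`: finitely many points
`a = x₀ < x₁ < ⋯ < xₙ = b` together with tags `tᵢ ∈ [xᵢ, xᵢ₊₁]`. -/
structure TaggedPartition (a b : ℝ) where
  n : ℕ
  points : ℕ → ℝ
  tags : ℕ → ℝ
  point_zero : points 0 = a
  point_last : points n = b
  mono : ∀ i < n, points i < points (i + 1)
  tag_mem : ∀ i < n, tags i ∈ Set.Icc (points i) (points (i + 1))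

/-- The Riemann sum of `f` over a tagged partition. -/
def riemannSum (f : ℝ → ℝ) {a b : ℝ} (P : TaggedPartition a b) : ℝ :=
  ∑ i ∈ Finset.range P.n, f (P.tags i) * (P.points (i + 1) - P.points i)

/-- `f` has Riemann integral `I` on `[a, b]`: the Riemann sums converge to
`I` as the mesh of the tagged partitions tends to `0`. -/
def HasRiemannIntegral (f : ℝ → ℝ) (a b : ℝ) (I : ℝ) : Prop :=
  ∀ ε > 0, ∃ δ > 0, ∀ P : TaggedPartition a b,
    (∀ i < P.n, P.points (i + 1) - P.points i ≤ δ) →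
      |riemannSum f P - I| < ε

/-- `f` is Riemann integrable on `[a, b]`. -/
def RiemannIntegrable (f : ℝ → ℝ) (a b : ℝ) : Prop :=
  ∃ I : ℝ, HasRiemannIntegral f a b I


open Set
open scoped ENNReal NNReal

namespace RL

lemma points_mono {a b : ℝ} (P : TaggedPartition a b) {i j : ℕ} (hij : i ≤ j) (hj : j ≤ P.n) :
    P.points i ≤ P.points j := by
  induction j with
  | zero => simp_all
  | succ k ih =>
    rcases Nat.lt_succ_iff_lt_or_eq.mp (Nat.lt_succ_of_le hij) with h | h
    · exact (ih (Nat.lt_succ_iff.mp h) (le_trans (Nat.le_succ k) hj)).trans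
        (P.mono k (Nat.lt_of_succ_le hj)).le
    · exact le_of_eq (by rw [h])

lemma points_mem {a b : ℝ} (P : TaggedPartition a b) {i : ℕ} (h : i ≤ P.n) :
    P.points i ∈ Set.Icc a b := by
  constructor
  · have := points_mono P (Nat.zero_le i) h
    rwa [P.point_zero] at this
  · have := points_mono P h le_rfl
    rwa [P.point_last] at this

lemma subinterval_subset {a b : ℝ} (P : TaggedPartition a b) {i : ℕ} (h : i < P.n) :
    Set.Icc (P.points i) (P.points (i + 1)) ⊆ Set.Icc a b :=
  Set.Icc_subset_Icc (points_mem P h.le).1 (points_mem P h).2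

/-- Oscillation of `f` over a set. -/
noncomputable def osc (f : ℝ → ℝ) (s : Set ℝ) : ℝ := sSup (f '' s) - sInf (f '' s)

lemma osc_nonneg {f : ℝ → ℝ} {s : Set ℝ} (hs : s.Nonempty) (hb : BddAbove (f '' s))
    (hb' : BddBelow (f '' s)) : 0 ≤ osc f s := by
  obtain ⟨x, hx⟩ := hs
  have h1 : f x ≤ sSup (f '' s) := le_csSup hb ⟨x, hx, rfl⟩
  have h2 : sInf (f '' s) ≤ f x := csInf_le hb' ⟨x, hx, rfl⟩
  simp only [osc]; linarith

lemma sub_le_osc {f : ℝ → ℝ} {s : Set ℝ} {x y : ℝ} (hx : x ∈ s) (hy : y ∈ s)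
    (hb : BddAbove (f '' s)) (hb' : BddBelow (f '' s)) : f x - f y ≤ osc f s := by
  have h1 : f x ≤ sSup (f '' s) := le_csSup hb ⟨x, hx, rfl⟩
  have h2 : sInf (f '' s) ≤ f y := csInf_le hb' ⟨y, hy, rfl⟩
  simp only [osc]; linarith

lemma abs_sub_le_osc {f : ℝ → ℝ} {s : Set ℝ} {x y : ℝ} (hx : x ∈ s) (hy : y ∈ s)
    (hb : BddAbove (f '' s)) (hb' : BddBelow (f '' s)) : |f x - f y| ≤ osc f s := by
  rcases abs_sub_le_iff.mpr ⟨sub_le_osc hx hy hb hb', sub_le_osc hy hx hb hb'⟩ with h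
  exact h

end RL

namespace RL
variable {f : ℝ → ℝ} {a b M : ℝ}

lemma bddAbove_image (hM : ∀ x ∈ Set.Icc a b, |f x| ≤ M) {s : Set ℝ} (hs : s ⊆ Set.Icc a b) :
    BddAbove (f '' s) := by
  refine ⟨M, ?_⟩
  rintro y ⟨x, hx, rfl⟩
  exact (abs_le.mp (hM x (hs hx))).2

lemma bddBelow_image (hM : ∀ x ∈ Set.Icc a b, |f x| ≤ M) {s : Set ℝ} (hs : s ⊆ Set.Icc a b) :
    BddBelow (f '' s) := by
  refine ⟨-M, ?_⟩
  rintro y ⟨x, hx, rfl⟩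
  exact (abs_le.mp (hM x (hs hx))).1

/-- Uniform partition points. -/
noncomputable def upts (a b : ℝ) (n : ℕ) (i : ℕ) : ℝ := a + i * ((b - a) / n)

lemma upts_zero (n : ℕ) : upts a b n 0 = a := by simp [upts]

lemma upts_last {n : ℕ} (hn : 0 < n) : upts a b n n = b := by
  have : (n : ℝ) ≠ 0 := Nat.cast_ne_zero.mpr hn.ne'
  simp only [upts]
  field_simp
  ring

lemma upts_step (n : ℕ) (i : ℕ) : upts a b n (i + 1) - upts a b n i = (b - a) / n := by
  simp only [upts]; push_cast; ring

/-- Uniform tagged partition with given tags. -/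
noncomputable def uniformPartition (hab : a < b) {n : ℕ} (hn : 0 < n) (t : ℕ → ℝ)
    (ht : ∀ i < n, t i ∈ Set.Icc (upts a b n i) (upts a b n (i + 1))) : TaggedPartition a b where
  n := n
  points := upts a b n
  tags := t
  point_zero := upts_zero n
  point_last := upts_last hn
  mono := fun i _ => by
    have h : (0:ℝ) < (b - a) / n := div_pos (by linarith) (Nat.cast_pos.mpr hn)
    have := upts_step (a := a) (b := b) n i
    linarith
  tag_mem := ht

lemma sum_osc_lt (hab : a < b) (hM : ∀ x ∈ Set.Icc a b, |f x| ≤ M) {I : ℝ}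
    (hI : HasRiemannIntegral f a b I) {c : ℝ} (hc : 0 < c) :
    ∃ n : ℕ, 0 < n ∧
      ∑ i ∈ Finset.range n, osc f (Set.Icc (upts a b n i) (upts a b n (i + 1))) * ((b - a) / n)
        < c := by
  obtain ⟨δ, hδ, hP⟩ := hI (c / 4) (by linarith)
  obtain ⟨m, hm⟩ := exists_nat_gt ((b - a) / δ)
  set n := m + 1 with hn
  have hn0 : 0 < n := Nat.succ_pos m
  have hnR : (0:ℝ) < n := Nat.cast_pos.mpr hn0
  have hmesh : (b - a) / n ≤ δ := by
    have hmn : (b - a) / δ < n := lt_of_lt_of_le hm (by exact_mod_cast Nat.le_succ m)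
    rw [div_le_iff₀ hnR]
    rw [div_lt_iff₀ hδ] at hmn
    linarith [mul_comm δ (n:ℝ)]
  have hstep : (0:ℝ) < (b - a) / n := div_pos (by linarith) hnR
  set x : ℕ → ℝ := upts a b n with hx
  have hsub : ∀ i < n, Set.Icc (x i) (x (i + 1)) ⊆ Set.Icc a b := by
    intro i hi
    have h0 : a ≤ x i := by
      simp only [hx, upts, le_add_iff_nonneg_right]
      exact mul_nonneg (Nat.cast_nonneg i) hstep.le
    have h1 : x (i + 1) ≤ b := by
      have hle : ((i:ℝ)+1) ≤ n := by exact_mod_cast hi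
      have hmul := mul_le_mul_of_nonneg_right hle hstep.le
      have hnb : (n:ℝ) * ((b - a)/n) = b - a := by field_simp
      simp only [hx, upts]
      rw [Nat.cast_add, Nat.cast_one]
      linarith
    exact Set.Icc_subset_Icc h0 h1
  have hne : ∀ i, (Set.Icc (x i) (x (i + 1))).Nonempty := by
    intro i
    refine Set.nonempty_Icc.mpr ?_
    have := upts_step (a := a) (b := b) n i
    simp only [hx]; linarith
  set κ := c / (8 * (b - a)) with hκ
  have hκ0 : 0 < κ := by
    have hba : (0:ℝ) < b - a := by linarith
    rw [hκ]; positivity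
  -- choose near-sup and near-inf tags
  have hSup : ∀ i < n, ∃ s ∈ Set.Icc (x i) (x (i + 1)),
      sSup (f '' Set.Icc (x i) (x (i + 1))) - κ < f s := by
    intro i hi
    have hne' : (f '' Set.Icc (x i) (x (i + 1))).Nonempty := (hne i).image f
    obtain ⟨y, hy, hy2⟩ := exists_lt_of_lt_csSup hne'
      (sub_lt_self _ hκ0 : sSup (f '' Set.Icc (x i) (x (i+1))) - κ < _)
    obtain ⟨s, hs, rfl⟩ := hy
    exact ⟨s, hs, hy2⟩
  have hInf : ∀ i < n, ∃ u ∈ Set.Icc (x i) (x (i + 1)),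
      f u < sInf (f '' Set.Icc (x i) (x (i + 1))) + κ := by
    intro i hi
    have hne' : (f '' Set.Icc (x i) (x (i + 1))).Nonempty := (hne i).image f
    obtain ⟨y, hy, hy2⟩ := exists_lt_of_csInf_lt hne'
      (lt_add_of_pos_right _ hκ0 : _ < sInf (f '' Set.Icc (x i) (x (i+1))) + κ)
    obtain ⟨u, hu, rfl⟩ := hy
    exact ⟨u, hu, hy2⟩
  classical
  choose! s hs hfs using hSup
  choose! u hu hfu using hInf
  set Ts : ℕ → ℝ := fun i => if i < n then s i else x i with hTs
  set Tu : ℕ → ℝ := fun i => if i < n then u i else x i with hTu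
  have hTsm : ∀ i < n, Ts i ∈ Set.Icc (x i) (x (i+1)) := by
    intro i hi; simp only [hTs, if_pos hi]; exact hs i hi
  have hTum : ∀ i < n, Tu i ∈ Set.Icc (x i) (x (i+1)) := by
    intro i hi; simp only [hTu, if_pos hi]; exact hu i hi
  set Ps := uniformPartition hab hn0 Ts hTsm
  set Pu := uniformPartition hab hn0 Tu hTum
  have hmesh' : ∀ (P : TaggedPartition a b), P.points = x → P.n = n →
      (∀ i < P.n, P.points (i+1) - P.points i ≤ δ) := by
    intro P hPp hPn i hi
    rw [hPp]
    have := upts_step (a := a) (b := b) n i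
    simp only [hx]
    linarith
  have hSs := hP Ps (hmesh' Ps rfl rfl)
  have hSu := hP Pu (hmesh' Pu rfl rfl)
  have hsum : riemannSum f Ps - riemannSum f Pu < c / 2 := by
    have h1 := abs_lt.mp hSs
    have h2 := abs_lt.mp hSu
    linarith [h1.1, h1.2, h2.1, h2.2]
  have key : ∑ i ∈ Finset.range n, osc f (Set.Icc (x i) (x (i + 1))) * ((b - a) / n)
      ≤ (riemannSum f Ps - riemannSum f Pu) + 2 * κ * (b - a) := by
    have hrw : riemannSum f Ps - riemannSum f Pu
        = ∑ i ∈ Finset.range n, (f (Ts i) - f (Tu i)) * ((b - a) / n) := by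
      have e1 : riemannSum f Ps
          = ∑ i ∈ Finset.range n, f (Ts i) * (upts a b n (i+1) - upts a b n i) := rfl
      have e2 : riemannSum f Pu
          = ∑ i ∈ Finset.range n, f (Tu i) * (upts a b n (i+1) - upts a b n i) := rfl
      rw [e1, e2, ← Finset.sum_sub_distrib]
      refine Finset.sum_congr rfl fun i _ => ?_
      rw [upts_step]
      ring
    have hterm : ∀ i ∈ Finset.range n,
        osc f (Set.Icc (x i) (x (i + 1))) * ((b - a) / n)
          ≤ (f (Ts i) - f (Tu i)) * ((b - a) / n) + 2 * κ * ((b - a) / n) := by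
      intro i hi
      rw [Finset.mem_range] at hi
      have h1 := hfs i hi
      have h2 := hfu i hi
      have hosc : osc f (Set.Icc (x i) (x (i+1))) ≤ f (Ts i) - f (Tu i) + 2 * κ := by
        simp only [hTs, hTu, if_pos hi, osc]
        linarith
      nlinarith [hstep]
    calc ∑ i ∈ Finset.range n, osc f (Set.Icc (x i) (x (i + 1))) * ((b - a) / n)
        ≤ ∑ i ∈ Finset.range n,
            ((f (Ts i) - f (Tu i)) * ((b - a) / n) + 2 * κ * ((b - a) / n)) :=
          Finset.sum_le_sum hterm
      _ = (∑ i ∈ Finset.range n, (f (Ts i) - f (Tu i)) * ((b - a) / n))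
            + ∑ _i ∈ Finset.range n, 2 * κ * ((b - a) / n) := Finset.sum_add_distrib
      _ = (riemannSum f Ps - riemannSum f Pu) + 2 * κ * (b - a) := by
          rw [← hrw, Finset.sum_const, Finset.card_range, nsmul_eq_mul]
          congr 1
          field_simp
  refine ⟨n, hn0, ?_⟩
  have hκb : 2 * κ * (b - a) = c / 4 := by
    have hba : b - a ≠ 0 := by linarith
    rw [hκ]
    field_simp
    ring
  calc ∑ i ∈ Finset.range n, osc f (Set.Icc (upts a b n i) (upts a b n (i + 1))) * ((b - a) / n)
      = ∑ i ∈ Finset.range n, osc f (Set.Icc (x i) (x (i + 1))) * ((b - a) / n) := rfl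
    _ ≤ (riemannSum f Ps - riemannSum f Pu) + 2 * κ * (b - a) := key
    _ < c / 2 + c / 4 := by rw [hκb]; linarith
    _ < c := by linarith

end RL

namespace RL
variable {f : ℝ → ℝ} {a b M : ℝ}

lemma upts_subset (hab : a ≤ b) {n : ℕ} (hn : 0 < n) {i : ℕ} (hi : i < n) :
    Set.Icc (upts a b n i) (upts a b n (i + 1)) ⊆ Set.Icc a b := by
  have hnR : (0:ℝ) < n := Nat.cast_pos.mpr hn
  have hstep : (0:ℝ) ≤ (b - a) / n := div_nonneg (by linarith) hnR.le
  have h0 : a ≤ upts a b n i := by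
    simp only [upts, le_add_iff_nonneg_right]
    exact mul_nonneg (Nat.cast_nonneg i) hstep
  have h1 : upts a b n (i + 1) ≤ b := by
    have hle : ((i:ℝ)+1) ≤ n := by exact_mod_cast hi
    have hmul := mul_le_mul_of_nonneg_right hle hstep
    have hnb : (n:ℝ) * ((b - a)/n) = b - a := by field_simp
    simp only [upts]
    rw [Nat.cast_add, Nat.cast_one]
    linarith
  exact Set.Icc_subset_Icc h0 h1

lemma exists_subinterval (x : ℕ → ℝ) : ∀ n : ℕ, 0 < n → ∀ z : ℝ, x 0 ≤ z → z ≤ x n →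
    ∃ i < n, z ∈ Set.Icc (x i) (x (i + 1)) := by
  intro n
  induction n with
  | zero => omega
  | succ m ih =>
    intro _ z h0 h1
    by_cases hz : z ≤ x m
    · rcases Nat.eq_zero_or_pos m with rfl | hm
      · exact ⟨0, Nat.zero_lt_one, ⟨h0, h1⟩⟩
      · obtain ⟨i, hi, hmem⟩ := ih hm z h0 hz
        exact ⟨i, by omega, hmem⟩
    · exact ⟨m, by omega, ⟨(not_le.mp hz).le, h1⟩⟩

/-- Points of oscillation at least `η`. -/
def Dset (f : ℝ → ℝ) (a b η : ℝ) : Set ℝ :=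
  {x ∈ Set.Icc a b | ∀ δ > 0, ∃ y ∈ Set.Icc a b, |y - x| < δ ∧ η ≤ |f y - f x|}

lemma Dset_null (hab : a < b) (hM : ∀ x ∈ Set.Icc a b, |f x| ≤ M) {I : ℝ}
    (hI : HasRiemannIntegral f a b I) {η : ℝ} (hη : 0 < η) :
    volume (Dset f a b η) = 0 := by
  classical
  have key : ∀ ε : ℝ, 0 < ε → volume (Dset f a b η) ≤ ENNReal.ofReal ε := by
    intro ε hε
    obtain ⟨n, hn0, hsum⟩ := sum_osc_lt hab hM hI (mul_pos hη (half_pos hε))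
    set x : ℕ → ℝ := upts a b n with hx
    have hnR : (0:ℝ) < n := Nat.cast_pos.mpr hn0
    have hstep : (0:ℝ) < (b - a) / n := div_pos (by linarith) hnR
    set bad : Finset ℕ :=
      (Finset.range n).filter (fun i => η ≤ osc f (Set.Icc (x i) (x (i + 1)))) with hbad
    -- covering
    have hcover : Dset f a b η ⊆
        (⋃ i ∈ Finset.range (n + 1), {x i}) ∪ ⋃ i ∈ bad, Set.Icc (x i) (x (i + 1)) := by
      rintro z ⟨hz, hosc⟩
      by_cases hzp : ∃ j ∈ Finset.range (n + 1), z = x j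
      · obtain ⟨j, hj, rfl⟩ := hzp
        exact Or.inl (Set.mem_biUnion hj rfl)
      · push_neg at hzp
        have h0 : x 0 ≤ z := by rw [hx, upts_zero]; exact hz.1
        have h1 : z ≤ x n := by rw [hx, upts_last hn0]; exact hz.2
        obtain ⟨i, hi, hmem⟩ := exists_subinterval x n hn0 z h0 h1
        have hlt1 : x i < z :=
          lt_of_le_of_ne hmem.1 (fun h => hzp i (Finset.mem_range.mpr (by omega)) h.symm)
        have hlt2 : z < x (i + 1) :=
          lt_of_le_of_ne hmem.2 (fun h => hzp (i+1) (Finset.mem_range.mpr (by omega)) h)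
        obtain ⟨y, hy, hyd, hyf⟩ := hosc (min (z - x i) (x (i+1) - z))
          (lt_min (by linarith) (by linarith))
        have hymem : y ∈ Set.Icc (x i) (x (i + 1)) := by
          have h1 := abs_lt.mp hyd
          constructor
          · have := h1.1
            have := min_le_left (z - x i) (x (i+1) - z)
            linarith
          · have := h1.2
            have := min_le_right (z - x i) (x (i+1) - z)
            linarith
        have hsubi : Set.Icc (x i) (x (i + 1)) ⊆ Set.Icc a b := upts_subset hab.le hn0 hi
        have hoscge : η ≤ osc f (Set.Icc (x i) (x (i + 1))) :=
          le_trans hyf (abs_sub_le_osc hymem hmem (bddAbove_image hM hsubi)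
            (bddBelow_image hM hsubi))
        have hibad : i ∈ bad := Finset.mem_filter.mpr ⟨Finset.mem_range.mpr hi, hoscge⟩
        exact Or.inr (Set.mem_biUnion hibad hmem)
    -- total length of bad intervals is small
    have hlen : (bad.card : ℝ) * ((b - a) / n) ≤ ε / 2 := by
      have hbound : η * ((bad.card : ℝ) * ((b - a) / n))
          ≤ ∑ i ∈ Finset.range n, osc f (Set.Icc (x i) (x (i + 1))) * ((b - a) / n) := by
        have h1 : η * ((bad.card : ℝ) * ((b - a) / n))
            = ∑ i ∈ bad, η * ((b - a) / n) := by
          rw [Finset.sum_const, nsmul_eq_mul]; ring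
        rw [h1]
        calc ∑ _i ∈ bad, η * ((b - a) / n)
            ≤ ∑ i ∈ bad, osc f (Set.Icc (x i) (x (i + 1))) * ((b - a) / n) :=
              Finset.sum_le_sum fun i hi =>
                mul_le_mul_of_nonneg_right (Finset.mem_filter.mp hi).2 hstep.le
          _ ≤ ∑ i ∈ Finset.range n, osc f (Set.Icc (x i) (x (i + 1))) * ((b - a) / n) := by
              refine Finset.sum_le_sum_of_subset_of_nonneg (Finset.filter_subset _ _) ?_
              intro i hi _
              have hsubi : Set.Icc (x i) (x (i + 1)) ⊆ Set.Icc a b :=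
                upts_subset hab.le hn0 (Finset.mem_range.mp hi)
              have hnei : (Set.Icc (x i) (x (i+1))).Nonempty := by
                refine Set.nonempty_Icc.mpr ?_
                have := upts_step (a := a) (b := b) n i
                simp only [hx]; linarith
              exact mul_nonneg (osc_nonneg hnei (bddAbove_image hM hsubi)
                (bddBelow_image hM hsubi)) hstep.le
      nlinarith [hsum, hη]
    -- measure bound
    calc volume (Dset f a b η)
        ≤ volume ((⋃ i ∈ Finset.range (n + 1), {x i})
            ∪ ⋃ i ∈ bad, Set.Icc (x i) (x (i + 1))) := measure_mono hcover
      _ ≤ volume (⋃ i ∈ Finset.range (n + 1), {x i})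
            + volume (⋃ i ∈ bad, Set.Icc (x i) (x (i + 1))) := measure_union_le _ _
      _ ≤ 0 + ∑ i ∈ bad, volume (Set.Icc (x i) (x (i + 1))) := by
          gcongr
          · refine le_of_eq ?_
            refine (Set.Finite.biUnion (Finset.finite_toSet _)
              (fun i _ => Set.finite_singleton (x i))).measure_zero volume
          · exact measure_biUnion_finset_le _ _
      _ = ∑ i ∈ bad, ENNReal.ofReal ((b - a) / n) := by
          rw [zero_add]
          refine Finset.sum_congr rfl fun i _ => ?_
          rw [Real.volume_Icc]
          congr 1
          have := upts_step (a := a) (b := b) n i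
          simp only [hx]; linarith
      _ = ENNReal.ofReal ((bad.card : ℝ) * ((b - a) / n)) := by
          rw [Finset.sum_const, nsmul_eq_mul]
          rw [← ENNReal.ofReal_natCast, ← ENNReal.ofReal_mul (Nat.cast_nonneg _)]
      _ ≤ ENNReal.ofReal ε := ENNReal.ofReal_le_ofReal (by linarith)
  refine le_antisymm ?_ (zero_le)
  refine ENNReal.le_of_forall_pos_le_add fun ε hε _ => ?_
  rw [zero_add]
  calc volume (Dset f a b η) ≤ ENNReal.ofReal (ε : ℝ) := key (ε : ℝ) (by exact_mod_cast hε)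
    _ = (ε : ℝ≥0∞) := ENNReal.ofReal_coe_nnreal

end RL

namespace RL
variable {f : ℝ → ℝ} {a b M : ℝ}

lemma discont_null_of_integrable (hab : a < b) (hM : ∀ x ∈ Set.Icc a b, |f x| ≤ M)
    (h : RiemannIntegrable f a b) :
    volume {x ∈ Set.Icc a b | ¬ ContinuousWithinAt f (Set.Icc a b) x} = 0 := by
  obtain ⟨I, hI⟩ := h
  refine measure_mono_null (t := ⋃ k : ℕ, Dset f a b (1 / ((k : ℝ) + 1))) ?_
    (measure_iUnion_null fun k => Dset_null hab hM hI (by positivity))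
  rintro z ⟨hz, hc⟩
  rw [Metric.continuousWithinAt_iff] at hc
  push_neg at hc
  obtain ⟨ε, hε, hc⟩ := hc
  obtain ⟨k, hk⟩ := exists_nat_one_div_lt hε
  refine Set.mem_iUnion.mpr ⟨k, hz, fun δ hδ => ?_⟩
  obtain ⟨y, hy, hyd, hyf⟩ := hc δ hδ
  refine ⟨y, hy, by rwa [Real.dist_eq] at hyd, ?_⟩
  rw [Real.dist_eq] at hyf
  exact le_trans hk.le hyf

lemma integrableOn_of_null (hab : a ≤ b) (hM : ∀ x ∈ Set.Icc a b, |f x| ≤ M)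
    (hD : volume {x ∈ Set.Icc a b | ¬ ContinuousWithinAt f (Set.Icc a b) x} = 0) :
    IntegrableOn f (Set.Icc a b) volume := by
  set D := {x ∈ Set.Icc a b | ¬ ContinuousWithinAt f (Set.Icc a b) x} with hDdef
  set D' := toMeasurable volume D with hD'def
  have hD' : volume D' = 0 := by rw [hD'def, measure_toMeasurable]; exact hD
  have hmD' : MeasurableSet D' := measurableSet_toMeasurable _ _
  have hs : MeasurableSet (Set.Icc a b \ D') := measurableSet_Icc.diff hmD'
  have hcont : ContinuousOn f (Set.Icc a b \ D') := by
    intro x hx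
    have hcx : ContinuousWithinAt f (Set.Icc a b) x := by
      by_contra hc
      exact hx.2 (subset_toMeasurable _ _ ⟨hx.1, hc⟩)
    exact hcx.mono Set.diff_subset
  have hae : AEMeasurable f (volume.restrict (Set.Icc a b \ D')) := hcont.aemeasurable hs
  have hae2 : AEMeasurable f (volume.restrict (Set.Icc a b)) := by
    have hsub : Set.Icc a b ⊆ (Set.Icc a b \ D') ∪ D' := by
      intro x hx
      by_cases h : x ∈ D'
      exacts [Or.inr h, Or.inl ⟨hx, h⟩]
    have hle : volume.restrict (Set.Icc a b)
        ≤ volume.restrict (Set.Icc a b \ D') + volume.restrict D' :=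
      le_trans (Measure.restrict_mono hsub le_rfl) (Measure.restrict_union_le _ _)
    refine AEMeasurable.mono_measure ?_ hle
    refine hae.add_measure ?_
    rw [Measure.restrict_eq_zero.mpr hD']
    exact aemeasurable_zero_measure
  refine ⟨hae2.aestronglyMeasurable, ?_⟩
  apply HasFiniteIntegral.of_bounded (C := M)
  refine (ae_restrict_iff' measurableSet_Icc).mpr (ae_of_all _ fun x hx => ?_)
  simpa [Real.norm_eq_abs] using hM x hx

end RL

namespace RL
variable {f : ℝ → ℝ} {a b M : ℝ}

lemma sum_osc_small_of_null (hab : a < b) (hM : ∀ x ∈ Set.Icc a b, |f x| ≤ M)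
    (hD : volume {x ∈ Set.Icc a b | ¬ ContinuousWithinAt f (Set.Icc a b) x} = 0)
    {ε : ℝ} (hε : 0 < ε) :
    ∃ δ > 0, ∀ P : TaggedPartition a b, (∀ i < P.n, P.points (i + 1) - P.points i ≤ δ) →
      ∑ i ∈ Finset.range P.n,
        osc f (Set.Icc (P.points i) (P.points (i + 1))) * (P.points (i + 1) - P.points i)
          ≤ ε := by
  classical
  have hM0 : 0 ≤ M := le_trans (abs_nonneg _) (hM a ⟨le_rfl, hab.le⟩)
  set η := ε / (2 * (b - a)) with hη
  have hη0 : 0 < η := by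
    have : (0:ℝ) < b - a := by linarith
    rw [hη]; positivity
  set ε' := ε / (2 * (2 * M + 1)) with hε'
  have hε'0 : 0 < ε' := by rw [hε']; positivity
  -- open set around discontinuities
  obtain ⟨U, hDU, hUopen, hUvol⟩ :=
    Set.exists_isOpen_lt_of_lt {x ∈ Set.Icc a b | ¬ ContinuousWithinAt f (Set.Icc a b) x}
      (ENNReal.ofReal ε') (by rw [hD]; exact ENNReal.ofReal_pos.mpr hε'0)
  -- radii at continuity points
  have hrad : ∀ p : ℝ, p ∈ Set.Icc a b → ContinuousWithinAt f (Set.Icc a b) p →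
      ∃ r > 0, ∀ y ∈ Set.Icc a b, |y - p| < r → |f y - f p| < η / 3 := by
    intro p hp hc
    rw [Metric.continuousWithinAt_iff] at hc
    obtain ⟨r, hr0, hr⟩ := hc (η / 3) (by positivity)
    exact ⟨r, hr0, fun y hy hyd => by
      have := hr hy (by rwa [Real.dist_eq]); rwa [Real.dist_eq] at this⟩
  set C := {p : ℝ // p ∈ Set.Icc a b ∧ ContinuousWithinAt f (Set.Icc a b) p} with hC
  choose! r hr0 hr using fun p : C => hrad p.1 p.2.1 p.2.2
  set c : Option C → Set ℝ := fun o => Option.rec U (fun p => Metric.ball p.1 (r p)) o with hc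
  have hcopen : ∀ o, IsOpen (c o) := by
    rintro (_ | p)
    exacts [hUopen, Metric.isOpen_ball]
  have hccover : Set.Icc a b ⊆ ⋃ o, c o := by
    intro z hz
    by_cases hcz : ContinuousWithinAt f (Set.Icc a b) z
    · exact Set.mem_iUnion.mpr ⟨some ⟨z, hz, hcz⟩, Metric.mem_ball_self (hr0 ⟨z, hz, hcz⟩)⟩
    · exact Set.mem_iUnion.mpr ⟨none, hDU ⟨hz, hcz⟩⟩
  obtain ⟨δ₀, hδ₀, hLeb⟩ := lebesgue_number_lemma_of_metric isCompact_Icc hcopen hccover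
  refine ⟨δ₀ / 2, by positivity, fun P hmesh => ?_⟩
  set x := P.points with hxdef
  set n := P.n with hndef
  have hΔpos : ∀ i < n, 0 < x (i + 1) - x i := fun i hi => sub_pos.mpr (P.mono i hi)
  have hIsub : ∀ i < n, Set.Icc (x i) (x (i + 1)) ⊆ Set.Icc a b :=
    fun i hi => subinterval_subset P hi
  -- each subinterval fits in one cover element
  have hfit : ∀ i < n, ∃ o, Set.Icc (x i) (x (i + 1)) ⊆ c o := by
    intro i hi
    obtain ⟨o, ho⟩ := hLeb (x i) (points_mem P hi.le)
    refine ⟨o, fun y hy => ho ?_⟩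
    rw [Metric.mem_ball, Real.dist_eq, abs_sub_lt_iff]
    have h1 := hy.1
    have h2 := hy.2
    have h3 := hmesh i hi
    constructor <;> linarith
  set bad : Finset ℕ :=
    (Finset.range n).filter (fun i => Set.Icc (x i) (x (i + 1)) ⊆ U) with hbad
  -- good intervals have small oscillation
  have hgood : ∀ i ∈ Finset.range n, i ∉ bad →
      osc f (Set.Icc (x i) (x (i + 1))) ≤ η := by
    intro i hir hinb
    have hi : i < n := Finset.mem_range.mp hir
    obtain ⟨o, ho⟩ := hfit i hi
    match o with
    | none =>
      exact absurd (Finset.mem_filter.mpr ⟨hir, ho⟩) hinb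
    | some p =>
      have hball : ∀ y ∈ Set.Icc (x i) (x (i + 1)), |f y - f p.1| < η / 3 := by
        intro y hy
        refine hr p y (hIsub i hi hy) ?_
        have := ho hy
        rwa [Metric.mem_ball, Real.dist_eq] at this
      have hne : (f '' Set.Icc (x i) (x (i + 1))).Nonempty :=
        (Set.nonempty_Icc.mpr (sub_nonneg.mp (hΔpos i hi).le)).image f
      have hsup : sSup (f '' Set.Icc (x i) (x (i + 1))) ≤ f p.1 + η / 3 := by
        refine csSup_le hne ?_
        rintro y ⟨z, hz, rfl⟩
        have := abs_lt.mp (hball z hz)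
        linarith [this.2]
      have hinf : f p.1 - η / 3 ≤ sInf (f '' Set.Icc (x i) (x (i + 1))) := by
        refine le_csInf hne ?_
        rintro y ⟨z, hz, rfl⟩
        have := abs_lt.mp (hball z hz)
        linarith [this.1]
      simp only [osc]
      linarith
  -- bad intervals have small total length
  have hbadlen : ∑ i ∈ bad, (x (i + 1) - x i) ≤ ε' := by
    have hdisj : ∀ i ∈ bad, ∀ j ∈ bad, i ≠ j →
        Disjoint (Set.Ioo (x i) (x (i + 1))) (Set.Ioo (x j) (x (j + 1))) := by
      intro i hi j hj hij
      have hi' : i < n := Finset.mem_range.mp (Finset.mem_filter.mp hi).1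
      have hj' : j < n := Finset.mem_range.mp (Finset.mem_filter.mp hj).1
      rcases hij.lt_or_gt with h | h
      · have hle : x (i + 1) ≤ x j := points_mono P h hj'.le
        rw [Set.disjoint_left]
        rintro y ⟨_, h2⟩ ⟨h3, _⟩
        linarith
      · have hle : x (j + 1) ≤ x i := points_mono P h hi'.le
        rw [Set.disjoint_left]
        rintro y ⟨h2, _⟩ ⟨_, h3⟩
        linarith
    have hmeas : volume (⋃ i ∈ bad, Set.Ioo (x i) (x (i + 1)))
        = ∑ i ∈ bad, volume (Set.Ioo (x i) (x (i + 1))) :=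
      measure_biUnion_finset hdisj (fun i _ => measurableSet_Ioo)
    have hsubU : (⋃ i ∈ bad, Set.Ioo (x i) (x (i + 1))) ⊆ U := by
      refine Set.iUnion₂_subset fun i hi => ?_
      exact (Set.Ioo_subset_Icc_self).trans (Finset.mem_filter.mp hi).2
    have hlt : ∑ i ∈ bad, volume (Set.Ioo (x i) (x (i + 1))) < ENNReal.ofReal ε' := by
      rw [← hmeas]
      exact lt_of_le_of_lt (measure_mono hsubU) hUvol
    have hconv : ∑ i ∈ bad, volume (Set.Ioo (x i) (x (i + 1)))
        = ENNReal.ofReal (∑ i ∈ bad, (x (i + 1) - x i)) := by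
      rw [ENNReal.ofReal_sum_of_nonneg]
      · exact Finset.sum_congr rfl fun i _ => Real.volume_Ioo
      · intro i hi
        exact (hΔpos i (Finset.mem_range.mp (Finset.mem_filter.mp hi).1)).le
    rw [hconv] at hlt
    have := (ENNReal.ofReal_lt_ofReal_iff hε'0).mp hlt
    linarith
  -- combine
  have hsplit := Finset.sum_filter_add_sum_filter_not (Finset.range n)
    (fun i => Set.Icc (x i) (x (i + 1)) ⊆ U)
    (fun i => osc f (Set.Icc (x i) (x (i + 1))) * (x (i + 1) - x i))
  have hbadsum : ∑ i ∈ bad,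
      osc f (Set.Icc (x i) (x (i + 1))) * (x (i + 1) - x i) ≤ 2 * M * ε' := by
    calc ∑ i ∈ bad, osc f (Set.Icc (x i) (x (i + 1))) * (x (i + 1) - x i)
        ≤ ∑ i ∈ bad, 2 * M * (x (i + 1) - x i) := by
          refine Finset.sum_le_sum fun i hi => ?_
          have hi' : i < n := Finset.mem_range.mp (Finset.mem_filter.mp hi).1
          have hsubi := hIsub i hi'
          have hne : (f '' Set.Icc (x i) (x (i + 1))).Nonempty :=
            (Set.nonempty_Icc.mpr (sub_nonneg.mp (hΔpos i hi').le)).image f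
          have hoscle : osc f (Set.Icc (x i) (x (i + 1))) ≤ 2 * M := by
            have h1 : sSup (f '' Set.Icc (x i) (x (i + 1))) ≤ M := by
              refine csSup_le hne ?_
              rintro y ⟨z, hz, rfl⟩
              exact (abs_le.mp (hM z (hsubi hz))).2
            have h2 : -M ≤ sInf (f '' Set.Icc (x i) (x (i + 1))) := by
              refine le_csInf hne ?_
              rintro y ⟨z, hz, rfl⟩
              exact (abs_le.mp (hM z (hsubi hz))).1
            simp only [osc]
            linarith
          exact mul_le_mul_of_nonneg_right hoscle (hΔpos i hi').le
      _ = 2 * M * ∑ i ∈ bad, (x (i + 1) - x i) := by rw [Finset.mul_sum]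
      _ ≤ 2 * M * ε' := by
          refine mul_le_mul_of_nonneg_left hbadlen (by positivity)
  have hgoodsum : ∑ i ∈ (Finset.range n).filter
        (fun i => ¬ Set.Icc (x i) (x (i + 1)) ⊆ U),
      osc f (Set.Icc (x i) (x (i + 1))) * (x (i + 1) - x i) ≤ η * (b - a) := by
    have htel : ∑ i ∈ Finset.range n, (x (i + 1) - x i) = b - a := by
      rw [Finset.sum_range_sub]
      rw [hxdef, hndef, P.point_zero, P.point_last]
    calc ∑ i ∈ (Finset.range n).filter (fun i => ¬ Set.Icc (x i) (x (i + 1)) ⊆ U),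
          osc f (Set.Icc (x i) (x (i + 1))) * (x (i + 1) - x i)
        ≤ ∑ i ∈ (Finset.range n).filter (fun i => ¬ Set.Icc (x i) (x (i + 1)) ⊆ U),
            η * (x (i + 1) - x i) := by
          refine Finset.sum_le_sum fun i hi => ?_
          obtain ⟨hir, hinU⟩ := Finset.mem_filter.mp hi
          refine mul_le_mul_of_nonneg_right
            (hgood i hir (fun hmem => hinU (Finset.mem_filter.mp hmem).2))
            (hΔpos i (Finset.mem_range.mp hir)).le
      _ ≤ ∑ i ∈ Finset.range n, η * (x (i + 1) - x i) := by
          refine Finset.sum_le_sum_of_subset_of_nonneg (Finset.filter_subset _ _) ?_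
          intro i hi _
          exact mul_nonneg hη0.le (hΔpos i (Finset.mem_range.mp hi)).le
      _ = η * (b - a) := by rw [← Finset.mul_sum, htel]
  have hη2 : η * (b - a) = ε / 2 := by
    have hba : b - a ≠ 0 := ne_of_gt (by linarith)
    rw [hη]
    field_simp
    try ring
  have hε'2 : 2 * M * ε' ≤ ε / 2 := by
    have he : ε / 2 = ε' * (2 * M + 1) := by
      rw [hε']
      field_simp
    nlinarith [hε'0.le, hM0]
  calc ∑ i ∈ Finset.range n,
        osc f (Set.Icc (x i) (x (i + 1))) * (x (i + 1) - x i)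
      = (∑ i ∈ bad, osc f (Set.Icc (x i) (x (i + 1))) * (x (i + 1) - x i))
        + ∑ i ∈ (Finset.range n).filter (fun i => ¬ Set.Icc (x i) (x (i + 1)) ⊆ U),
            osc f (Set.Icc (x i) (x (i + 1))) * (x (i + 1) - x i) := hsplit.symm
    _ ≤ 2 * M * ε' + η * (b - a) := add_le_add hbadsum hgoodsum
    _ ≤ ε / 2 + ε / 2 := add_le_add hε'2 (le_of_eq hη2)
    _ = ε := by ring

end RL

namespace RL
variable {f : ℝ → ℝ} {a b M : ℝ}

lemma hasRiemannIntegral_of_null (hab : a < b) (hM : ∀ x ∈ Set.Icc a b, |f x| ≤ M)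
    (hD : volume {x ∈ Set.Icc a b | ¬ ContinuousWithinAt f (Set.Icc a b) x} = 0) :
    HasRiemannIntegral f a b (∫ x in a..b, f x) := by
  intro ε hε
  obtain ⟨δ, hδ, hosc⟩ := sum_osc_small_of_null hab hM hD (half_pos hε)
  refine ⟨δ, hδ, fun P hmesh => ?_⟩
  have hInt : IntegrableOn f (Set.Icc a b) volume := integrableOn_of_null hab.le hM hD
  have hint : ∀ i < P.n, IntervalIntegrable f volume (P.points i) (P.points (i + 1)) := by
    intro i hi
    refine MeasureTheory.IntegrableOn.intervalIntegrable ?_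
    refine hInt.mono_set ?_
    rw [Set.uIcc_of_le (P.mono i hi).le]
    exact subinterval_subset P hi
  have hIeq : ∫ x in a..b, f x
      = ∑ i ∈ Finset.range P.n, ∫ x in (P.points i)..(P.points (i + 1)), f x := by
    rw [intervalIntegral.sum_integral_adjacent_intervals hint, P.point_zero, P.point_last]
  have hterm : ∀ i ∈ Finset.range P.n,
      |f (P.tags i) * (P.points (i + 1) - P.points i)
        - ∫ x in (P.points i)..(P.points (i + 1)), f x|
      ≤ osc f (Set.Icc (P.points i) (P.points (i + 1))) * (P.points (i + 1) - P.points i) := by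
    intro i hir
    have hi : i < P.n := Finset.mem_range.mp hir
    have hle := (P.mono i hi).le
    have hsubi := subinterval_subset P hi
    have hbA := bddAbove_image hM hsubi
    have hbB := bddBelow_image hM hsubi
    have h1 : ∫ x in (P.points i)..(P.points (i + 1)), (f x - f (P.tags i))
        = (∫ x in (P.points i)..(P.points (i + 1)), f x)
          - (P.points (i + 1) - P.points i) * f (P.tags i) := by
      rw [intervalIntegral.integral_sub (hint i hi) intervalIntegrable_const,
        intervalIntegral.integral_const, smul_eq_mul]
    have h2 : ‖∫ x in (P.points i)..(P.points (i + 1)), (f x - f (P.tags i))‖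
        ≤ osc f (Set.Icc (P.points i) (P.points (i + 1))) * |P.points (i + 1) - P.points i| := by
      refine intervalIntegral.norm_integral_le_of_norm_le_const ?_
      intro x hx
      rw [Set.uIoc_of_le hle] at hx
      have hxm : x ∈ Set.Icc (P.points i) (P.points (i + 1)) := Set.Ioc_subset_Icc_self hx
      rw [Real.norm_eq_abs]
      exact abs_sub_le_osc hxm (P.tag_mem i hi) hbA hbB
    rw [h1, Real.norm_eq_abs] at h2
    rw [abs_sub_comm]
    calc |(∫ x in (P.points i)..(P.points (i + 1)), f x)
          - f (P.tags i) * (P.points (i + 1) - P.points i)|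
        = |(∫ x in (P.points i)..(P.points (i + 1)), f x)
          - (P.points (i + 1) - P.points i) * f (P.tags i)| := by ring_nf
      _ ≤ osc f (Set.Icc (P.points i) (P.points (i + 1))) * |P.points (i + 1) - P.points i| := h2
      _ = osc f (Set.Icc (P.points i) (P.points (i + 1))) * (P.points (i + 1) - P.points i) := by
          rw [abs_of_nonneg (by linarith [P.mono i hi])]
  calc |riemannSum f P - ∫ x in a..b, f x|
      = |∑ i ∈ Finset.range P.n, (f (P.tags i) * (P.points (i + 1) - P.points i)
          - ∫ x in (P.points i)..(P.points (i + 1)), f x)| := by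
        rw [riemannSum, hIeq, Finset.sum_sub_distrib]
    _ ≤ ∑ i ∈ Finset.range P.n, |f (P.tags i) * (P.points (i + 1) - P.points i)
          - ∫ x in (P.points i)..(P.points (i + 1)), f x| := Finset.abs_sum_le_sum_abs _ _
    _ ≤ ∑ i ∈ Finset.range P.n,
          osc f (Set.Icc (P.points i) (P.points (i + 1))) * (P.points (i + 1) - P.points i) :=
        Finset.sum_le_sum hterm
    _ ≤ ε / 2 := hosc P hmesh
    _ < ε := by linarith

end RL

/-- Lebesgue's criterion: a bounded function on `[a, b]` is Riemann
integrable iff its set of discontinuity points in `[a, b]` (relative to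
`[a, b]`) has Lebesgue measure zero. -/
theorem riemannIntegrable_iff_discontinuities_null (f : ℝ → ℝ) (a b : ℝ)
    (hab : a ≤ b) (hbd : ∃ M : ℝ, ∀ x ∈ Set.Icc a b, |f x| ≤ M) :
    RiemannIntegrable f a b ↔
      volume {x ∈ Set.Icc a b | ¬ ContinuousWithinAt f (Set.Icc a b) x} = 0 := by
  obtain ⟨M, hM⟩ := hbd
  rcases eq_or_lt_of_le hab with rfl | hlt
  · refine iff_of_true ⟨0, fun ε hε => ⟨1, one_pos, fun P _ => ?_⟩⟩ ?_
    · have hn : P.n = 0 := by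
        by_contra h
        have h1 : 1 ≤ P.n := Nat.one_le_iff_ne_zero.mpr h
        have h2 : P.points 0 < P.points 1 := P.mono 0 h1
        have h3 : P.points 1 ≤ P.points P.n := RL.points_mono P h1 le_rfl
        rw [P.point_zero] at h2
        rw [P.point_last] at h3
        linarith
      simp [riemannSum, hn, hε]
    · refine measure_mono_null (t := {a}) (fun x hx => ?_) Real.volume_singleton
      exact Set.mem_singleton_iff.mpr (le_antisymm hx.1.2 hx.1.1)
  · constructor
    · exact fun h => RL.discont_null_of_integrable hlt hM h
    · exact fun h => ⟨_, RL.hasRiemannIntegral_of_null hlt hM h⟩
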